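/- If a category of partitions D contains a partition with an odd total number of legs, then D contains the singleton partition. -/
import Mathlib


/-- A partition between `k` upper and `l` lower points, viewed as the
equivalence relation (setoid) on the points whose classes are the blocks. -/
abbrev PartitionKL (k l : ℕ) := Setoid (Fin k ⊕ Fin l)

/-- Placing two partitions side by side (disjoint union). -/
def sideBySide {α β : Type*} (p : Setoid α) (q : Setoid β) : Setoid (α ⊕ β) where
  r x y := match x, y with
    | .inl a, .inl b => p a b
    | .inr a, .inr b => q a b
    | _, _ => False
  iseqv := by
    constructor
    · rintro (a | a)
      · exact p.refl a
      · exact q.refl a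
    · rintro (a | a) (b | b) h
      · exact p.symm h
      · exact h.elim
      · exact h.elim
      · exact q.symm h
    · rintro (a | a) (b | b) (c | c) h1 h2 <;> first
        | exact h1.elim | exact h2.elim
        | exact p.trans h1 h2 | exact q.trans h1 h2

/-- Horizontal concatenation (tensor product) of partitions. -/
def tensorPart {k l k' l' : ℕ} (p : PartitionKL k l) (q : PartitionKL k' l') :
    PartitionKL (k + k') (l + l') :=
  Setoid.comap (fun x => match x with
    | .inl i => match finSumFinEquiv.symm i with
      | .inl a => Sum.inl (Sum.inl a)
      | .inr a => Sum.inr (Sum.inl a)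
    | .inr j => match finSumFinEquiv.symm j with
      | .inl b => Sum.inl (Sum.inr b)
      | .inr b => Sum.inr (Sum.inr b))
    (sideBySide p q)

/-- Vertical concatenation (composition) of partitions: place `p ∈ P(k,l)` on
top of `q ∈ P(l,m)`, join blocks across the middle `l` points, and restrict to
the outer `k + m` points (closed middle components disappear). -/
def compPart {k l m : ℕ} (p : PartitionKL k l) (q : PartitionKL l m) :
    PartitionKL k m :=
  Setoid.comap (Sum.map id Sum.inr)
    (Relation.EqvGen.setoid (fun x y : Fin k ⊕ (Fin l ⊕ Fin m) => match x, y with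
      | .inl a, .inl b => p (.inl a) (.inl b)
      | .inl a, .inr (.inl b) => p (.inl a) (.inr b)
      | .inr (.inl a), .inl b => p (.inr a) (.inl b)
      | .inr (.inl a), .inr (.inl b) => p (.inr a) (.inr b) ∨ q (.inl a) (.inl b)
      | .inr (.inl a), .inr (.inr b) => q (.inl a) (.inr b)
      | .inr (.inr a), .inr (.inl b) => q (.inr a) (.inl b)
      | .inr (.inr a), .inr (.inr b) => q (.inr a) (.inr b)
      | _, _ => False))

/-- Upside-down turning of a partition. -/
def flipPart {k l : ℕ} (p : PartitionKL k l) : PartitionKL l k :=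
  Setoid.comap Sum.swap p

/-- A category of partitions: a collection `D(k,l) ⊆ P(k,l)` closed under
horizontal and vertical concatenation and upside-down turning, and containing
the identity pairing and the semicircle `∩ ∈ P(0,2)`. -/
structure PartitionCategory where
  mem : ∀ k l : ℕ, Set (PartitionKL k l)
  tensor_mem : ∀ {k l k' l'} {p : PartitionKL k l} {q : PartitionKL k' l'},
    p ∈ mem k l → q ∈ mem k' l' → tensorPart p q ∈ mem (k + k') (l + l')
  comp_mem : ∀ {k l m} {p : PartitionKL k l} {q : PartitionKL l m},
    p ∈ mem k l → q ∈ mem l m → compPart p q ∈ mem k m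
  flip_mem : ∀ {k l} {p : PartitionKL k l}, p ∈ mem k l → flipPart p ∈ mem l k
  id_mem : (⊤ : PartitionKL 1 1) ∈ mem 1 1
  semicircle_mem : (⊤ : PartitionKL 0 2) ∈ mem 0 2

/-- The position of a point when the `k + l` points are traversed
counterclockwise starting from bottom left. -/
def ord {k l : ℕ} : Fin k ⊕ Fin l → ℕ
  | .inl i => l + (k - 1 - i.val)
  | .inr j => j.val

/-- A partition is noncrossing when its strings can be drawn without
crossings. -/
def NoncrossingKL {k l : ℕ} (p : PartitionKL k l) : Prop :=
  ∀ a b c d : Fin k ⊕ Fin l, ord a < ord b → ord b < ord c → ord c < ord d →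
    p a c → p b d → p a b


lemma idn_mem (C : PartitionCategory) : ∀ n, (C.mem n n).Nonempty
  | 0 => ⟨_, C.comp_mem C.semicircle_mem (C.flip_mem C.semicircle_mem)⟩
  | (n+1) => by
      obtain ⟨p, hp⟩ := idn_mem C n
      exact ⟨_, C.tensor_mem hp C.id_mem⟩

lemma cup_mem (C : PartitionCategory) (n : ℕ) : (C.mem n (n+2)).Nonempty := by
  obtain ⟨p, hp⟩ := idn_mem C n
  exact ⟨_, C.tensor_mem hp C.semicircle_mem⟩

lemma reduce_lower (C : PartitionCategory) {k l : ℕ}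
    (h : (C.mem k (l+2)).Nonempty) : (C.mem k l).Nonempty := by
  obtain ⟨p, hp⟩ := h
  obtain ⟨q, hq⟩ := cup_mem C l
  exact ⟨_, C.comp_mem hp (C.flip_mem hq)⟩

lemma reduce_upper (C : PartitionCategory) {k l : ℕ}
    (h : (C.mem (k+2) l).Nonempty) : (C.mem k l).Nonempty := by
  obtain ⟨p, hp⟩ := h
  obtain ⟨q, hq⟩ := cup_mem C k
  exact ⟨_, C.comp_mem hq hp⟩

lemma redk (C : PartitionCategory) : ∀ k l, (C.mem k l).Nonempty → (C.mem (k % 2) l).Nonempty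
  | 0, _, h => h
  | 1, _, h => h
  | (k+2), l, h => by
      rw [Nat.add_mod_right]
      exact redk C k l (reduce_upper C h)

lemma redl (C : PartitionCategory) : ∀ k l, (C.mem k l).Nonempty → (C.mem k (l % 2)).Nonempty
  | _, 0, h => h
  | _, 1, h => h
  | k, (l+2), h => by
      rw [Nat.add_mod_right]
      exact redl C k l (reduce_lower C h)

lemma setoid01_eq_top (p : PartitionKL 0 1) : p = (⊤ : PartitionKL 0 1) := by
  have he : ∀ a b : Fin 0 ⊕ Fin 1, a = b := by
    rintro (a | a) (b | b)
    · exact a.elim0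
    · exact a.elim0
    · exact b.elim0
    · rw [Subsingleton.elim a b]
  ext a b
  constructor
  · intro; trivial
  · intro _; exact he a b ▸ p.refl b

/-- If a category of partitions contains a partition with an odd total number
of legs, then it contains the singleton partition (one lower point). -/
theorem singleton_mem_of_odd_legs (C : PartitionCategory)
    (h : ∃ k l, ∃ p, p ∈ C.mem k l ∧ Odd (k + l)) :
    (⊤ : PartitionKL 0 1) ∈ C.mem 0 1 := by
  obtain ⟨k, l, p, hp, hodd⟩ := h
  have h1 : (C.mem (k % 2) (l % 2)).Nonempty := redl C _ _ (redk C k l ⟨p, hp⟩)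
  have hk2 := Nat.mod_lt k (show 0 < 2 by norm_num)
  have hl2 := Nat.mod_lt l (show 0 < 2 by norm_num)
  have hparity : k % 2 + l % 2 = 1 := by
    have := Nat.odd_iff.mp hodd
    omega
  rcases Nat.eq_zero_or_pos (k % 2) with h0 | h0
  · have hl1 : l % 2 = 1 := by omega
    rw [h0, hl1] at h1
    obtain ⟨q, hq⟩ := h1
    exact setoid01_eq_top q ▸ hq
  · have hk1 : k % 2 = 1 := by omega
    have hl0 : l % 2 = 0 := by omega
    rw [hk1, hl0] at h1
    obtain ⟨q, hq⟩ := h1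
    have := C.flip_mem hq
    exact setoid01_eq_top _ ▸ this
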